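/- Let λ > 0 and a > 0, and define the threshold t* by t* = λa/2 if λ ≤ 1/a², and t* = √λ − 1/(2a) if λ > 1/a². For v ∈ ℝ with |v| > t*, define φ(|v|) = arccos(27λa² / (4(1 + a|v|)³) − 1) and g_{a,λ}(v) = sgn(v) · ( ((1 + a|v|)/3)(1 + 2 cos(φ(|v|)/3 − π/3)) − 1 ) / a. Then g_{a,λ}(v) is a global minimizer over ℝ of the function x ↦ (x − v)² + λ ρ_a(x). -/

import Mathlib

open Matrix Filter Topology

noncomputable def rho (a t : ℝ) : ℝ := a * |t| / (a * |t| + 1)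

noncomputable def Pa {n : ℕ} (a : ℝ) (x : Fin n → ℝ) : ℝ := ∑ i, rho a (x i)

open scoped Classical in
noncomputable def l0 {n : ℕ} (x : Fin n → ℝ) : ℕ :=
  (Finset.univ.filter fun i => x i ≠ 0).card

def SOL {m n : ℕ} (A : Matrix (Fin m) (Fin n) ℝ) (b : Fin m → ℝ) : Set (Fin n → ℝ) :=
  {x | A.mulVec x = b ∧ 0 ≤ x}

noncomputable def sqN {n : ℕ} (v : Fin n → ℝ) : ℝ := ∑ i, (v i) ^ 2

def projPos {n : ℕ} (v : Fin n → ℝ) : Fin n → ℝ := fun i => max 0 (v i)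

noncomputable def C1 {m n : ℕ} (A : Matrix (Fin m) (Fin n) ℝ) (b : Fin m → ℝ)
    (lam a : ℝ) (x : Fin n → ℝ) : ℝ :=
  sqN (A.mulVec x - b) + lam * Pa a x

noncomputable def C2 {m n : ℕ} (A : Matrix (Fin m) (Fin n) ℝ) (b : Fin m → ℝ)
    (lam a mu : ℝ) (x z : Fin n → ℝ) : ℝ :=
  mu * (C1 A b lam a x - sqN (A.mulVec x - A.mulVec z)) + sqN (x - z)

noncomputable def Bmu {m n : ℕ} (A : Matrix (Fin m) (Fin n) ℝ) (b : Fin m → ℝ)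
    (mu : ℝ) (z : Fin n → ℝ) : Fin n → ℝ :=
  z + mu • (Aᵀ.mulVec (b - A.mulVec z))

set_option maxHeartbeats 1000000

lemma key (a lam v : ℝ) (ha : 0 < a) (hl : 0 < lam) (hv : 0 < v)
    (H1 : 27 * lam * a^2 < 8 * (1 + a*v)^3)
    (H2 : 4 * lam * a^2 ≤ (2*(1 + a*v) - 1)^2)
    (H3 : 1 + a*v < 3/2 → lam * a^2 < 2 * (a*v))
    (g : ℝ)
    (hg : g = ((1 + a*v)/3 * (1 + 2 * Real.cos (Real.arccos (27*lam*a^2/(4*(1 + a*v)^3) - 1)/3 - Real.pi/3)) - 1)/a) :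
    ∀ x : ℝ, (g - v)^2 + lam * rho a g ≤ (x - v)^2 + lam * rho a x := by
  set c : ℝ := 1 + a*v with hc
  have hc1 : 1 < c := by simp [hc]; positivity
  have hc0 : 0 < c := by linarith
  set y : ℝ := 27*lam*a^2/(4*c^3) - 1 with hy
  have hy1 : -1 < y := by
    have : 0 < 27*lam*a^2/(4*c^3) := by positivity
    simp [hy]; linarith
  have hy2 : y < 1 := by
    rw [hy, sub_lt_iff_lt_add, div_lt_iff₀ (by positivity)]
    linarith
  set φ : ℝ := Real.arccos y with hφ
  have hφ0 : 0 < φ := Real.arccos_pos.mpr hy2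
  have hφπ : φ ≤ Real.pi := Real.arccos_le_pi y
  have hcos : Real.cos φ = y := Real.cos_arccos hy1.le hy2.le
  set θ : ℝ := φ/3 - Real.pi/3 with hθ
  set k : ℝ := Real.cos θ with hk
  have hk2 : 1/2 < k := by
    have h1 : Real.cos (Real.pi/3) < Real.cos (-θ) := by
      apply Real.cos_lt_cos_of_nonneg_of_le_pi
      · rw [hθ]; linarith
      · linarith [Real.pi_pos]
      · rw [hθ]; linarith
    rw [Real.cos_neg, Real.cos_pi_div_three] at h1
    linarith
  have htriple : 4*k^3 - 3*k = -y := by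
    have h3 : (3:ℝ) * θ = -(Real.pi - φ) := by rw [hθ]; ring
    have := Real.cos_three_mul θ
    rw [h3, Real.cos_neg, Real.cos_pi_sub, hcos] at this
    rw [hk]; linarith
  set u : ℝ := c/3 * (1 + 2*k) with hu
  have hu1 : 2*c/3 < u := by rw [hu]; nlinarith
  have hcubic : u^3 - c*u^2 + lam*a^2/2 = 0 := by
    have hy' : y * (4*c^3) = 27*lam*a^2 - 4*c^3 := by
      rw [hy]; field_simp
    rw [hu]
    linear_combination (2*c^3/27)*htriple - (1/54)*hy'
  clear_value u k θ φ y c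
  clear hu hk hθ hφ hy htriple hcos hy1 hy2 hφ0 hφπ
  have hla : 0 < lam * a^2 := by positivity
  have hu0 : 0 < u := by nlinarith
  have huc : u < c := by
    by_contra h
    push_neg at h
    nlinarith [mul_nonneg (sq_nonneg u) (sub_nonneg.mpr h), hla]
  have hu3 : c - 1/2 ≤ u := by
    by_contra h
    push_neg at h
    have h32 : 3/2 < c := by linarith
    have hx : 2*c/3 < c - 1/2 := by linarith
    have hQ : 0 < (c-1/2)^2 + (c-1/2)*u + u^2 - c*((c-1/2)+u) := by
      nlinarith [mul_pos (sub_pos.mpr hx) (sub_pos.mpr hu1), sq_nonneg (c-1/2-2*c/3), sq_nonneg (u-2*c/3)]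
    nlinarith [mul_pos (sub_pos.mpr h) hQ]
  have hu4 : 1 ≤ u := by
    by_contra h
    push_neg at h
    have h32 : c < 3/2 := by linarith
    have hH3 := H3 h32
    have hx : 2*c/3 < 1 := by linarith
    have hcs : 0 < c*((1-2*c/3)+(u-2*c/3)) := by
      apply mul_pos hc0; linarith
    have hQ : 0 < 1^2 + 1*u + u^2 - c*(1+u) := by
      nlinarith [mul_pos (sub_pos.mpr hx) (sub_pos.mpr hu1), hcs, sq_nonneg (1-2*c/3), sq_nonneg (u-2*c/3)]
    nlinarith [mul_pos (sub_pos.mpr h) hQ]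
  have hgu : a * g + 1 = u := by
    rw [hg]; field_simp; ring
  have hg0 : 0 ≤ g := by
    nlinarith
  subst hc
  subst hgu
  have hpos : ∀ x : ℝ, 0 ≤ x → (g - v)^2 + lam * rho a g ≤ (x - v)^2 + lam * rho a x := by
    intro x hx
    have hP : (0:ℝ) < a*x + 1 := by nlinarith
    have hU : (0:ℝ) < a*g + 1 := hu0
    rw [rho, rho, abs_of_nonneg hg0, abs_of_nonneg hx]
    have hcoef : 0 ≤ a*x + 2*(a*g+1) + 1 - 2*(1+a*v) := by
      have : 0 ≤ a*x := by positivity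
      linarith
    have h2 : (x-g) * ((a*g+1)^3 - (1+a*v)*(a*g+1)^2 + lam*a^2/2) = 0 := by
      rw [hcubic, mul_zero]
    have hnum : 0 ≤ ((x-v)^2 - (g-v)^2)*((a*x+1)*(a*g+1)) + lam*((a*x)*(a*g+1) - (a*g)*(a*x+1)) := by
      nlinarith [h2, mul_nonneg (mul_nonneg (sq_nonneg (x-g)) hcoef) hU.le, ha]
    have hAB : ((x - v)^2 + lam * (a*x/(a*x+1))) - ((g - v)^2 + lam * (a*g/(a*g+1)))
        = (((x-v)^2 - (g-v)^2)*((a*x+1)*(a*g+1)) + lam*((a*x)*(a*g+1) - (a*g)*(a*x+1))) / ((a*x+1)*(a*g+1)) := by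
      field_simp
      ring
    have : 0 ≤ ((x - v)^2 + lam * (a*x/(a*x+1))) - ((g - v)^2 + lam * (a*g/(a*g+1))) := by
      rw [hAB]
      exact div_nonneg hnum (by positivity)
    linarith
  intro x
  rcases le_or_gt 0 x with hx | hx
  · exact hpos x hx
  · have h1 := hpos (-x) (by linarith)
    have h2 : rho a x = rho a (-x) := by rw [rho, rho, abs_neg]
    have h3 : (-x - v)^2 ≤ (x - v)^2 := by nlinarith
    rw [h2]
    linarith

theorem stmt11 (lam a : ℝ) (hl : 0 < lam) (ha : 0 < a)
    (tstar : ℝ)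
    (htstar : tstar = if lam ≤ 1 / a ^ 2 then lam * a / 2 else Real.sqrt lam - 1 / (2 * a))
    (v : ℝ) (hv : |v| > tstar)
    (phi g : ℝ)
    (hphi : phi = Real.arccos (27 * lam * a ^ 2 / (4 * (1 + a * |v|) ^ 3) - 1))
    (hg : g = Real.sign v *
      (((1 + a * |v|) / 3 * (1 + 2 * Real.cos (phi / 3 - Real.pi / 3)) - 1) / a)) :
    ∀ x : ℝ, (g - v) ^ 2 + lam * rho a g ≤ (x - v) ^ 2 + lam * rho a x := by
  -- |v| satisfies the hypotheses of key
  set V : ℝ := |v| with hVdef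
  have h1 : 27 * lam * a^2 < 8 * (1 + a*V)^3 ∧ 4 * lam * a^2 ≤ (2*(1 + a*V) - 1)^2 ∧
      (1 + a*V < 3/2 → lam * a^2 < 2 * (a*V)) ∧ 0 < V := by
    rw [htstar] at hv
    by_cases hcase : lam ≤ 1 / a ^ 2
    · rw [if_pos hcase] at hv
      have hs1 : lam * a^2 ≤ 1 := by
        rw [le_div_iff₀ (by positivity)] at hcase
        linarith
      have hV0 : 0 < V := lt_trans (by positivity) hv
      have haV : lam * a^2 / 2 < a * V := by
        have := mul_lt_mul_of_pos_left hv ha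
        calc lam * a^2/2 = a * (lam * a / 2) := by ring
        _ < a * V := this
      refine ⟨?_, ?_, fun _ => by linarith, hV0⟩
      · have hcb : (1 + lam*a^2/2)^3 < (1 + a*V)^3 := by
          have h01 : (0:ℝ) ≤ 1 + lam*a^2/2 := by positivity
          exact pow_lt_pow_left₀ (by linarith) h01 (by norm_num)
        nlinarith [mul_nonneg (sq_nonneg (lam*a^2 - 1)) (show (0:ℝ) ≤ lam*a^2 + 8 by positivity)]
      · nlinarith [sq_nonneg (1 - lam*a^2), mul_pos (show (0:ℝ) < 2*(1+a*V) - 1 - (1 + lam*a^2) by linarith) (show (0:ℝ) < 2*(1+a*V) - 1 + (1 + lam*a^2) by nlinarith [mul_pos ha hV0, mul_pos hl (mul_pos ha ha)])]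
    · rw [if_neg hcase] at hv
      push_neg at hcase
      set w : ℝ := a * Real.sqrt lam with hw
      have hw2 : w^2 = lam * a^2 := by
        rw [hw, mul_pow, Real.sq_sqrt hl.le]; ring
      have hw1 : 1 < w := by
        rw [hw]
        have : 1/a < Real.sqrt lam := by
          rw [show (1:ℝ)/a = Real.sqrt ((1/a)^2) from (Real.sqrt_sq (by positivity)).symm]
          apply Real.sqrt_lt_sqrt (by positivity)
          calc (1/a)^2 = 1/a^2 := by ring
          _ < lam := hcase
        calc (1:ℝ) = a * (1/a) := by field_simp
        _ < a * Real.sqrt lam := by exact mul_lt_mul_of_pos_left this ha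
      have haV : w - 1/2 < a * V := by
        have := mul_lt_mul_of_pos_left hv ha
        calc w - 1/2 = a * (Real.sqrt lam - 1/(2*a)) := by rw [hw]; field_simp
        _ < a * V := this
      have hV0 : 0 < V := by
        by_contra h
        push_neg at h
        nlinarith [mul_nonpos_of_nonneg_of_nonpos ha.le h]
      refine ⟨?_, ?_, fun h => by linarith, hV0⟩
      · have hcb : (1/2 + w)^3 < (1 + a*V)^3 := by
          exact pow_lt_pow_left₀ (by linarith) (by linarith) (by norm_num)
        nlinarith [mul_nonneg (sq_nonneg (w-1)) (show (0:ℝ) ≤ 8*w+1 by linarith), hw2]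
      · nlinarith [hw2, mul_pos (show (0:ℝ) < 2*(1+a*V) - 1 - 2*w by linarith) (show (0:ℝ) < 2*(1+a*V) - 1 + 2*w by linarith)]
  obtain ⟨H1, H2, H3, hV0⟩ := h1
  have hvne : v ≠ 0 := by
    intro h
    rw [hVdef, h, abs_zero] at hV0
    exact lt_irrefl _ hV0
  rcases lt_or_gt_of_ne hvne with hneg | hpos
  · -- v < 0
    have hVv : V = -v := abs_of_neg hneg
    set G : ℝ := ((1 + a*V)/3 * (1 + 2 * Real.cos (Real.arccos (27*lam*a^2/(4*(1 + a*V)^3) - 1)/3 - Real.pi/3)) - 1)/a with hG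
    have hgG : g = -G := by
      rw [hg, Real.sign_of_neg hneg, hphi, hG]
      ring_nf
    have hkey := key a lam V ha hl hV0 H1 H2 H3 G hG
    intro x
    have h1 := hkey (-x)
    have e1 : (G - V)^2 = (g - v)^2 := by rw [hgG, hVv]; ring
    have e2 : rho a G = rho a g := by rw [hgG, rho, rho, abs_neg]
    have e3 : (-x - V)^2 = (x - v)^2 := by rw [hVv]; ring
    have e4 : rho a (-x) = rho a x := by rw [rho, rho, abs_neg]
    rw [e1, e2, e3, e4] at h1
    exact h1
  · -- v > 0
    have hVv : V = v := abs_of_pos hpos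
    have hg' : g = ((1 + a*V)/3 * (1 + 2 * Real.cos (Real.arccos (27*lam*a^2/(4*(1 + a*V)^3) - 1)/3 - Real.pi/3)) - 1)/a := by
      rw [hg, Real.sign_of_pos hpos, hphi, one_mul]
    have hkey := key a lam V ha hl hV0 H1 H2 H3 g hg'
    rw [← hVv]
    intro x
    have := hkey x
    rw [show (g - V)^2 = (g-V)^2 from rfl] at this
    exact this
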